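/- Let q be a unimodular symmetric bilinear form on a free R-module N and b ∈ O(q,R) be R-semisimple. Then there is a b-invariant q-orthogonal decomposition N = N_+ ⊕ N_- ⊕ N_* such that b acts as +1 on N_+, as −1 on N_-, and b_* = b|N_* satisfies b_* − b_*^{-1} ∈ GL(N_*). -/

import Mathlib

open Finset

section CommAlg

variable {A : Type*} [CommRing A]

private lemma L1 (γ : A) (m : ℕ) (hγ : γ ^ m = 1) :
    γ * ∑ i ∈ range m, γ ^ i = ∑ i ∈ range m, γ ^ i := by
  rw [Finset.mul_sum]
  simp_rw [← pow_succ']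
  have h1 := Finset.sum_range_succ' (fun i => γ ^ i) m
  rw [Finset.sum_range_succ (fun i => γ ^ i) m, hγ, pow_zero] at h1
  exact (add_right_cancel h1).symm

private lemma L2 (γ : A) (m : ℕ) (hγ : γ ^ m = 1) (j : ℕ) :
    γ ^ j * ∑ i ∈ range m, γ ^ i = ∑ i ∈ range m, γ ^ i := by
  induction j with
  | zero => simp
  | succ n ih => rw [pow_succ, mul_assoc, L1 γ m hγ, ih]

private lemma L3 (γ : A) (m : ℕ) (hγ : γ ^ m = 1) :
    (∑ i ∈ range m, γ ^ i) * ∑ i ∈ range m, γ ^ i = (m : A) * ∑ i ∈ range m, γ ^ i := by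
  rw [Finset.sum_mul]
  have : ∀ i ∈ range m, γ ^ i * ∑ j ∈ range m, γ ^ j = ∑ j ∈ range m, γ ^ j :=
    fun i _ => L2 γ m hγ i
  rw [Finset.sum_congr rfl this, Finset.sum_const, card_range, nsmul_eq_mul]

private lemma L4 (γ : A) (m : ℕ) (hγ : γ ^ m = 1) :
    (γ - 1) * ∑ i ∈ range m, (i : A) * γ ^ i
      = (m : A) - ∑ i ∈ range m, γ ^ i := by
  have key : γ * ∑ i ∈ range m, (i : A) * γ ^ i
      = (∑ i ∈ range m, (i : A) * γ ^ i) - (∑ i ∈ range m, γ ^ i) + (m : A) := by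
    rw [Finset.mul_sum]
    have e1 : ∀ i ∈ range m, γ * ((i : A) * γ ^ i) = ((i+1 : ℕ) : A) * γ ^ (i+1) - γ ^ (i+1) := by
      intro i _
      push_cast
      ring
    rw [Finset.sum_congr rfl e1, Finset.sum_sub_distrib]
    have h1 := Finset.sum_range_succ' (fun i => ((i : ℕ) : A) * γ ^ i) m
    rw [Finset.sum_range_succ (fun i => ((i : ℕ) : A) * γ ^ i) m, hγ] at h1
    have h2 := Finset.sum_range_succ' (fun i => γ ^ i) m
    rw [Finset.sum_range_succ (fun i => γ ^ i) m, hγ, pow_zero] at h2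
    simp only [Nat.cast_zero, zero_mul, add_zero, mul_one] at h1
    -- h1 : ∑ range m + (m:A) = ∑ (i+1 cast) γ^(i+1)
    -- h2 : ∑ range m + 1 = ∑ γ^(i+1) + 1
    have h2' : ∑ i ∈ range m, γ ^ (i + 1) = ∑ i ∈ range m, γ ^ i := (add_right_cancel h2).symm
    rw [← h1, h2']
    ring
  rw [sub_mul, one_mul, key]
  ring

end CommAlg

section CommAlg2

variable {A : Type*} [CommRing A]

private def sP (γ : A) (m : ℕ) : A := ∑ i ∈ range m, γ ^ i
private def vP (γ : A) (m : ℕ) : A := ∑ i ∈ range m, (i : A) * γ ^ i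
private def piP (γ c : A) (m : ℕ) : A := c * (sP γ m + sP (-γ) m)

variable (γ c : A) (m : ℕ)

private lemma hγ' (hm : Even m) (hγ : γ ^ m = 1) : (-γ) ^ m = 1 := by rw [hm.neg_pow, hγ]

private lemma Hs (hγ : γ ^ m = 1) : sP γ m * sP γ m = (m : A) * sP γ m := by
  unfold sP; exact L3 γ m hγ

private lemma Ht (hm : Even m) (hγ : γ ^ m = 1) :
    sP (-γ) m * sP (-γ) m = (m : A) * sP (-γ) m := by
  unfold sP; exact L3 (-γ) m (hγ' γ m hm hγ)

private lemma Hts (hm : Even m) (hγ : γ ^ m = 1) : sP (-γ) m * sP γ m = 0 := by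
  unfold sP
  rw [Finset.sum_mul]
  have e1 : ∀ j ∈ range m, (-γ) ^ j * ∑ i ∈ range m, γ ^ i
      = (-1 : A) ^ j * ∑ i ∈ range m, γ ^ i := by
    intro j _
    rw [neg_pow, mul_assoc, L2 γ m hγ j]
  rw [Finset.sum_congr rfl e1, ← Finset.sum_mul, neg_one_geom_sum, if_pos hm, zero_mul]

private lemma Hst (hm : Even m) (hγ : γ ^ m = 1) : sP γ m * sP (-γ) m = 0 := by
  rw [mul_comm]; exact Hts γ m hm hγ

private lemma Hgs (hγ : γ ^ m = 1) : γ * sP γ m = sP γ m := by unfold sP; exact L1 γ m hγ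

private lemma Hgt (hm : Even m) (hγ : γ ^ m = 1) : γ * sP (-γ) m = -sP (-γ) m := by
  have h := L1 (-γ) m (hγ' γ m hm hγ)
  unfold sP
  unfold sP at h
  linear_combination -h

private lemma Hsπ (hm : Even m) (hγ : γ ^ m = 1) (hc : c * (m : A) = 1) :
    sP γ m * piP γ c m = sP γ m := by
  unfold piP
  linear_combination c * Hs γ m hγ + c * Hst γ m hm hγ + sP γ m * hc

private lemma Htπ (hm : Even m) (hγ : γ ^ m = 1) (hc : c * (m : A) = 1) :
    sP (-γ) m * piP γ c m = sP (-γ) m := by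
  unfold piP
  linear_combination c * Hts γ m hm hγ + c * Ht γ m hm hγ + sP (-γ) m * hc

private lemma KP1 (hm : Even m) (hγ : γ ^ m = 1) (hc : c * (m : A) = 1) :
    piP γ c m * piP γ c m = piP γ c m := by
  unfold piP
  linear_combination c^2 * Hs γ m hγ + c^2 * Ht γ m hm hγ + c^2 * Hst γ m hm hγ +
    c^2 * Hts γ m hm hγ + c * (sP γ m + sP (-γ) m) * hc

private lemma KP2 (hm : Even m) (hγ : γ ^ m = 1) : γ * γ * piP γ c m = piP γ c m := by
  unfold piP
  linear_combination c * γ * Hgs γ m hγ + c * Hgs γ m hγ + c * γ * Hgt γ m hm hγ -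
    c * Hgt γ m hm hγ

private lemma HE (hm : Even m) (hγ : γ ^ m = 1) (hc : c * (m : A) = 1) :
    (1 - piP γ c m) * (1 - piP γ c m) = 1 - piP γ c m := by
  linear_combination KP1 γ c m hm hγ hc

private lemma KpX (hm : Even m) (hγ : γ ^ m = 1) (hc : c * (m : A) = 1) (x : A) :
    piP γ c m * (x * (1 - piP γ c m)) = 0 := by
  linear_combination (-x) * KP1 γ c m hm hγ hc

private lemma KW1 (hm : Even m) (hγ : γ ^ m = 1) (hc : c * (m : A) = 1) :
    (γ - 1) * ((c * vP γ m) * (1 - piP γ c m)) = 1 - piP γ c m := by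
  have HL4 : (γ - 1) * vP γ m = (m : A) - sP γ m := by unfold vP sP; exact L4 γ m hγ
  linear_combination c * (1 - piP γ c m) * HL4 + (1 - piP γ c m) * hc +
    c * Hsπ γ c m hm hγ hc

private lemma KW2 (hm : Even m) (hγ : γ ^ m = 1) (hc : c * (m : A) = 1) :
    (γ + 1) * ((-(c * vP (-γ) m)) * (1 - piP γ c m)) = 1 - piP γ c m := by
  have HL4 : ((-γ) - 1) * vP (-γ) m = (m : A) - sP (-γ) m := by
    unfold vP sP; exact L4 (-γ) m (hγ' γ m hm hγ)
  linear_combination c * (1 - piP γ c m) * HL4 + (1 - piP γ c m) * hc +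
    c * Htπ γ c m hm hγ hc

private lemma KW3 (hm : Even m) (hm0 : m ≠ 0) (hγ : γ ^ m = 1) (hc : c * (m : A) = 1) :
    (γ - γ ^ (m-1)) *
    (((c * vP γ m) * (-(c * vP (-γ) m)) * γ) * (1 - piP γ c m)) = 1 - piP γ c m := by
  have hpow : γ ^ (m - 1) * γ = 1 := by
    rw [← pow_succ, Nat.sub_add_cancel (Nat.one_le_iff_ne_zero.mpr hm0), hγ]
  have kw1 := KW1 γ c m hm hγ hc
  have kw2 := KW2 γ c m hm hγ hc
  have he := HE γ c m hm hγ hc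
  linear_combination (-((c * vP γ m) * (-(c * vP (-γ) m)) * (1 - piP γ c m))) * hpow +
    ((γ + 1) * ((-(c * vP (-γ) m)) * (1 - piP γ c m))) * kw1 + (1 - piP γ c m) * kw2 +
    (1 - (γ * γ - 1) * ((c * vP γ m) * (-(c * vP (-γ) m)))) * he

end CommAlg2

section Master

private theorem master {R : Type*} [CommRing R] [IsDomain R]
    {N : Type*} [AddCommGroup N] [Module R N]
    (q : N →ₗ[R] N →ₗ[R] R)
    (b : N ≃ₗ[R] N) (hb : ∀ x y : N, q (b x) (b y) = q x y)
    {c2 : R} (hc2 : c2 * 2 = 1) (h2 : (2 : R) ≠ 0)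
    (π : Module.End R N)
    (hππ : π * π = π)
    (hβπ : (b : N →ₗ[R] N) * π = π * (b : N →ₗ[R] N))
    (hβ2π : (b : N →ₗ[R] N) * ((b : N →ₗ[R] N) * π) = π)
    (hs1 : ∀ z, π z = 0 → ∃ w, π w = 0 ∧ b w - w = z)
    (hs2 : ∀ z, π z = 0 → ∃ w, π w = 0 ∧ b w + w = z)
    (hs3 : ∀ z, π z = 0 → ∃ w, π w = 0 ∧ b w - b.symm w = z)
    (hinj : ∀ x, π x = 0 → b x - b.symm x = 0 → x = 0) :
    ∃ Nplus Nminus Nstar : Submodule R N,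
      DirectSum.IsInternal ![Nplus, Nminus, Nstar] ∧
      (∀ x ∈ Nplus, ∀ y ∈ Nminus, q x y = 0) ∧
      (∀ x ∈ Nplus, ∀ y ∈ Nstar, q x y = 0) ∧
      (∀ x ∈ Nminus, ∀ y ∈ Nstar, q x y = 0) ∧
      (∀ x ∈ Nplus, b x = x) ∧
      (∀ x ∈ Nminus, b x = -x) ∧
      (∀ x ∈ Nstar, b x ∈ Nstar) ∧
      Set.BijOn (fun x => b x - b.symm x) (Nstar : Set N) (Nstar : Set N) := by
  set β : N →ₗ[R] N := (b : N →ₗ[R] N) with hβdef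
  -- pointwise commuting of π with b and b.symm
  have hπb : ∀ x, π (b x) = b (π x) := by
    intro x
    have h := LinearMap.ext_iff.mp hβπ x
    simpa [Module.End.mul_apply, hβdef] using h.symm
  have hπbs : ∀ x, π (b.symm x) = b.symm (π x) := by
    intro x
    apply b.injective
    have h1 : b (π (b.symm x)) = π x := by
      rw [← hπb (b.symm x), b.apply_symm_apply]
    rw [h1, b.apply_symm_apply]
  have hbb : ∀ x, b (b (π x)) = π x := by
    intro x
    have h := LinearMap.ext_iff.mp hβ2π x
    simpa [Module.End.mul_apply, hβdef] using h
  -- the idempotents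
  set X : N →ₗ[R] N := π + β * π with hXdef
  set Y : N →ₗ[R] N := π - β * π with hYdef
  set ep : N →ₗ[R] N := c2 • X with hepdef
  set em : N →ₗ[R] N := c2 • Y with hemdef
  have hπ1β : π * (β * π) = (β * π) * π := by
    rw [← mul_assoc, ← hβπ, mul_assoc, hππ]
  have hπX : π * X = X := by
    rw [hXdef, mul_add, hππ, hπ1β, mul_assoc, hππ]
  have hXπ : X * π = X := by
    rw [hXdef, add_mul, hππ, mul_assoc, hππ]
  have hYπ : Y * π = Y := by
    rw [hYdef, sub_mul, hππ, mul_assoc, hππ]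
  have hπY : π * Y = Y := by
    rw [hYdef, mul_sub, hππ, hπ1β, mul_assoc, hππ]
  have hβX : β * X = X := by
    rw [hXdef, mul_add, ← mul_assoc β β π, mul_assoc, hβ2π, add_comm]
  have hβY : β * Y = -Y := by
    rw [hYdef, mul_sub, ← mul_assoc β β π, mul_assoc, hβ2π, neg_sub]
  have hXX : X * X = X + X := by
    calc X * X = (π + β * π) * X := by rw [hXdef]
    _ = π * X + β * (π * X) := by rw [add_mul, mul_assoc]
    _ = X + X := by rw [hπX, hβX]
  have hYY : Y * Y = Y + Y := by
    calc Y * Y = (π - β * π) * Y := by rw [hYdef]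
    _ = π * Y - β * (π * Y) := by rw [sub_mul, mul_assoc]
    _ = Y - -Y := by rw [hπY, hβY]
    _ = Y + Y := by rw [sub_neg_eq_add]
  have hXY : X * Y = 0 := by
    calc X * Y = π * Y + β * (π * Y) := by rw [hXdef, add_mul, mul_assoc]
    _ = Y + β * Y := by rw [hπY]
    _ = 0 := by rw [hβY, add_neg_cancel]
  have hYX : Y * X = 0 := by
    calc Y * X = π * X - β * (π * X) := by rw [hYdef, sub_mul, mul_assoc]
    _ = X - β * X := by rw [hπX]
    _ = 0 := by rw [hβX, sub_self]
  -- scalar and smul helpers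
  have hsmulmul : ∀ (a a' : R) (f g : N →ₗ[R] N), (a • f) * (a' • g) = (a * a') • (f * g) := by
    intro a a' f g
    rw [smul_mul_assoc, mul_smul_comm, smul_smul]
  have hcc : c2 * c2 + c2 * c2 = c2 := by linear_combination c2 * hc2
  -- idempotent identities
  have hepep : ep * ep = ep := by
    rw [hepdef, hsmulmul, hXX, smul_add, ← add_smul, hcc]
  have hemem : em * em = em := by
    rw [hemdef, hsmulmul, hYY, smul_add, ← add_smul, hcc]
  have hepem : ep * em = 0 := by rw [hepdef, hemdef, hsmulmul, hXY, smul_zero]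
  have hemep : em * ep = 0 := by rw [hemdef, hepdef, hsmulmul, hYX, smul_zero]
  have hπep : π * ep = ep := by rw [hepdef, mul_smul_comm, hπX]
  have hepπ : ep * π = ep := by rw [hepdef, smul_mul_assoc, hXπ]
  have hπem : π * em = em := by rw [hemdef, mul_smul_comm, hπY]
  have hemπ : em * π = em := by rw [hemdef, smul_mul_assoc, hYπ]
  have hβep : β * ep = ep := by rw [hepdef, mul_smul_comm, hβX]
  have hβem : β * em = -em := by rw [hemdef, mul_smul_comm, hβY, smul_neg]
  have hsum : ep + em = π := by
    have hXY2 : X + Y = (2 : R) • π := by rw [hXdef, hYdef, two_smul]; abel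
    rw [hepdef, hemdef, ← smul_add, hXY2, smul_smul, hc2, one_smul]
  -- pointwise versions
  have pfep : ∀ y, b (ep y) = ep y := by
    intro y
    have h := LinearMap.ext_iff.mp hβep y
    simpa [Module.End.mul_apply, hβdef] using h
  have pfem : ∀ y, b (em y) = -(em y) := by
    intro y
    have h := LinearMap.ext_iff.mp hβem y
    simpa [Module.End.mul_apply, hβdef] using h
  have pfsum : ∀ x, ep x + em x = π x := by
    intro x
    have h := LinearMap.ext_iff.mp hsum x
    simpa using h
  have hepep' : ∀ y, ep (ep y) = ep y := by
    intro y
    have h := LinearMap.ext_iff.mp hepep y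
    simpa [Module.End.mul_apply] using h
  have hemem' : ∀ y, em (em y) = em y := by
    intro y
    have h := LinearMap.ext_iff.mp hemem y
    simpa [Module.End.mul_apply] using h
  have hepem' : ∀ y, ep (em y) = 0 := by
    intro y
    have h := LinearMap.ext_iff.mp hepem y
    simpa [Module.End.mul_apply] using h
  have hemep' : ∀ y, em (ep y) = 0 := by
    intro y
    have h := LinearMap.ext_iff.mp hemep y
    simpa [Module.End.mul_apply] using h
  have hπep' : ∀ y, π (ep y) = ep y := by
    intro y
    have h := LinearMap.ext_iff.mp hπep y
    simpa [Module.End.mul_apply] using h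
  have hπem' : ∀ y, π (em y) = em y := by
    intro y
    have h := LinearMap.ext_iff.mp hπem y
    simpa [Module.End.mul_apply] using h
  have hππ' : ∀ y, π (π y) = π y := by
    intro y
    have h := LinearMap.ext_iff.mp hππ y
    simpa [Module.End.mul_apply] using h
  have hkerep : ∀ x, π x = 0 → ep x = 0 := by
    intro x hx
    have h := LinearMap.ext_iff.mp hepπ x
    simp only [Module.End.mul_apply, hx, map_zero] at h
    exact h.symm
  have hkerem : ∀ x, π x = 0 → em x = 0 := by
    intro x hx
    have h := LinearMap.ext_iff.mp hemπ x
    simp only [Module.End.mul_apply, hx, map_zero] at h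
    exact h.symm
  refine ⟨LinearMap.range ep, LinearMap.range em, LinearMap.ker π, ?_, ?_, ?_, ?_, ?_, ?_, ?_, ?_⟩
  · -- direct sum
    apply DirectSum.isInternal_submodule_of_iSupIndep_of_iSup_eq_top
    · intro i
      fin_cases i
      · have hle : (⨆ j, ⨆ (_ : j ≠ (0 : Fin 3)),
            ![LinearMap.range ep, LinearMap.range em, LinearMap.ker π] j) ≤ LinearMap.ker ep := by
          apply iSup_le; intro j; apply iSup_le; intro hj
          fin_cases j
          · exact absurd rfl hj
          · rintro x ⟨y, rfl⟩
            exact LinearMap.mem_ker.mpr (hepem' y)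
          · intro x hx
            exact LinearMap.mem_ker.mpr (hkerep x (LinearMap.mem_ker.mp hx))
        refine Disjoint.mono_right hle ?_
        rw [Submodule.disjoint_def]
        rintro x ⟨y, rfl⟩ hk
        have := LinearMap.mem_ker.mp hk
        rwa [hepep' y] at this
      · have hle : (⨆ j, ⨆ (_ : j ≠ (1 : Fin 3)),
            ![LinearMap.range ep, LinearMap.range em, LinearMap.ker π] j) ≤ LinearMap.ker em := by
          apply iSup_le; intro j; apply iSup_le; intro hj
          fin_cases j
          · rintro x ⟨y, rfl⟩
            exact LinearMap.mem_ker.mpr (hemep' y)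
          · exact absurd rfl hj
          · intro x hx
            exact LinearMap.mem_ker.mpr (hkerem x (LinearMap.mem_ker.mp hx))
        refine Disjoint.mono_right hle ?_
        rw [Submodule.disjoint_def]
        rintro x ⟨y, rfl⟩ hk
        have := LinearMap.mem_ker.mp hk
        rwa [hemem' y] at this
      · have hle : (⨆ j, ⨆ (_ : j ≠ (2 : Fin 3)),
            ![LinearMap.range ep, LinearMap.range em, LinearMap.ker π] j)
              ≤ LinearMap.ker (π - 1) := by
          apply iSup_le; intro j; apply iSup_le; intro hj
          fin_cases j
          · rintro x ⟨y, rfl⟩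
            refine LinearMap.mem_ker.mpr ?_
            simp [hπep' y]
          · rintro x ⟨y, rfl⟩
            refine LinearMap.mem_ker.mpr ?_
            simp [hπem' y]
          · exact absurd rfl hj
        refine Disjoint.mono_right hle ?_
        rw [Submodule.disjoint_def]
        intro x hx hk
        have h1 : π x = 0 := LinearMap.mem_ker.mp hx
        have h2' := LinearMap.mem_ker.mp hk
        simp only [LinearMap.sub_apply, Module.End.one_apply, h1, zero_sub, neg_eq_zero] at h2'
        exact h2'
    · rw [eq_top_iff]
      intro x _
      have hx : x = ep x + em x + (x - π x) := by rw [← pfsum x]; abel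
      rw [hx]
      refine Submodule.add_mem _ (Submodule.add_mem _ ?_ ?_) ?_
      · exact Submodule.mem_iSup_of_mem 0 ⟨x, rfl⟩
      · exact Submodule.mem_iSup_of_mem 1 ⟨x, rfl⟩
      · refine Submodule.mem_iSup_of_mem 2 (LinearMap.mem_ker.mpr ?_)
        rw [map_sub, hππ', sub_self]
  · -- Nplus ⟂ Nminus
    rintro x ⟨x', rfl⟩ y ⟨y', rfl⟩
    have h := hb (ep x') (em y')
    rw [pfep x', pfem y', map_neg] at h
    have h4 : (2 : R) * q (ep x') (em y') = 0 := by linear_combination -h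
    rcases mul_eq_zero.mp h4 with h' | h'
    · exact absurd h' h2
    · exact h'
  · -- Nplus ⟂ Nstar
    rintro x ⟨x', rfl⟩ y hy
    obtain ⟨w, hw0, hww⟩ := hs1 y (LinearMap.mem_ker.mp hy)
    have h := hb (ep x') w
    rw [pfep x'] at h
    calc q (ep x') y = q (ep x') (b w - w) := by rw [hww]
    _ = q (ep x') (b w) - q (ep x') w := map_sub _ _ _
    _ = 0 := by rw [h, sub_self]
  · -- Nminus ⟂ Nstar
    rintro x ⟨x', rfl⟩ y hy
    obtain ⟨w, hw0, hww⟩ := hs2 y (LinearMap.mem_ker.mp hy)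
    have h := hb (em x') w
    rw [pfem x', map_neg, LinearMap.neg_apply] at h
    calc q (em x') y = q (em x') (b w) + q (em x') w := by rw [← hww, map_add]
    _ = 0 := by linear_combination -h
  · rintro x ⟨y, rfl⟩
    exact pfep y
  · rintro x ⟨y, rfl⟩
    exact pfem y
  · intro x hx
    refine LinearMap.mem_ker.mpr ?_
    rw [hπb, LinearMap.mem_ker.mp hx, map_zero]
  · refine ⟨?_, ?_, ?_⟩
    · intro x hx
      have hx' : π x = 0 := LinearMap.mem_ker.mp hx
      show b x - b.symm x ∈ (LinearMap.ker π : Set N)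
      refine SetLike.mem_coe.mpr (LinearMap.mem_ker.mpr ?_)
      rw [map_sub, hπb, hπbs, hx', map_zero, map_zero, sub_self]
    · intro x hx y hy h
      simp only at h
      have hx' : π x = 0 := LinearMap.mem_ker.mp hx
      have hy' : π y = 0 := LinearMap.mem_ker.mp hy
      have hπd : π (x - y) = 0 := by rw [map_sub, hx', hy', sub_zero]
      have hbd : b (x - y) - b.symm (x - y) = 0 := by
        rw [map_sub, map_sub, sub_sub_sub_comm, h, sub_self]
      exact sub_eq_zero.mp (hinj _ hπd hbd)
    · intro z hz
      obtain ⟨w, hw0, hww⟩ := hs3 z (LinearMap.mem_ker.mp hz)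
      exact ⟨w, SetLike.mem_coe.mpr (LinearMap.mem_ker.mpr hw0), hww⟩

end Master

section BranchK

set_option maxHeartbeats 2000000 in
private theorem branch_finite_order {R : Type*} [CommRing R] [IsDomain R]
    {N : Type*} [AddCommGroup N] [Module R N]
    (q : N →ₗ[R] N →ₗ[R] R)
    (b : N ≃ₗ[R] N) (hb : ∀ x y : N, q (b x) (b y) = q x y)
    (k : ℕ) (hk : 0 < k) (hbk : b ^ k = 1)
    (hu : IsUnit ((2 * k : ℕ) : R)) :
    ∃ Nplus Nminus Nstar : Submodule R N,
      DirectSum.IsInternal ![Nplus, Nminus, Nstar] ∧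
      (∀ x ∈ Nplus, ∀ y ∈ Nminus, q x y = 0) ∧
      (∀ x ∈ Nplus, ∀ y ∈ Nstar, q x y = 0) ∧
      (∀ x ∈ Nminus, ∀ y ∈ Nstar, q x y = 0) ∧
      (∀ x ∈ Nplus, b x = x) ∧
      (∀ x ∈ Nminus, b x = -x) ∧
      (∀ x ∈ Nstar, b x ∈ Nstar) ∧
      Set.BijOn (fun x => b x - b.symm x) (Nstar : Set N) (Nstar : Set N) := by
  set m : ℕ := 2 * k with hmdef
  have hm0 : m ≠ 0 := by omega
  have hm1 : 1 ≤ m := by omega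
  have hmE : Even m := ⟨k, by omega⟩
  have hbm : b ^ m = 1 := by rw [hmdef, mul_comm, pow_mul, hbk, one_pow]
  set β : N →ₗ[R] N := (b : N →ₗ[R] N) with hβdef
  have hβm : β ^ m = 1 := by
    ext x
    rw [Module.End.pow_apply, Module.End.one_apply]
    have h : (b ^ m) x = x := by rw [hbm]; rfl
    rw [LinearEquiv.pow_apply] at h
    have hco : ⇑β = ⇑b := by rw [hβdef]; exact LinearEquiv.coe_coe b
    rw [hco]
    exact h
  -- units
  have h2k : IsUnit ((2 : R)) := by
    have hcast : ((2 * k : ℕ) : R) = 2 * (k : R) := by push_cast; ring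
    have hu3 := hu
    rw [hcast] at hu3
    exact isUnit_of_mul_isUnit_left hu3
  obtain ⟨u, hu'⟩ := hu
  set c : R := ((u⁻¹ : Rˣ) : R) with hcdef
  have hc : c * ((m : ℕ) : R) = 1 := by rw [← hu']; exact u.inv_mul
  obtain ⟨u2, hu2⟩ := h2k
  have hc2 : ((u2⁻¹ : Rˣ) : R) * 2 = 1 := by rw [← hu2]; exact u2.inv_mul
  have h2ne : (2 : R) ≠ 0 := by rw [← hu2]; exact u2.ne_zero
  -- quotient ring
  set I : Ideal (Polynomial R) := Ideal.span {Polynomial.X ^ m - 1} with hIdef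
  set γ : Polynomial R ⧸ I := Ideal.Quotient.mk I Polynomial.X with hγdef
  set cQ : Polynomial R ⧸ I := Ideal.Quotient.mk I (Polynomial.C c) with hcQdef
  have hγm : γ ^ m = 1 := by
    rw [hγdef, ← map_pow, show (1 : Polynomial R ⧸ I) = Ideal.Quotient.mk I 1 from
      (map_one _).symm, Ideal.Quotient.mk_eq_mk_iff_sub_mem]
    exact Ideal.subset_span (Set.mem_singleton _)
  have hcQ : cQ * ((m : ℕ) : Polynomial R ⧸ I) = 1 := by
    rw [hcQdef, show ((m : ℕ) : Polynomial R ⧸ I) = Ideal.Quotient.mk I ((m : ℕ) : Polynomial R)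
      from (map_natCast _ m).symm, ← map_mul, ← map_one (Ideal.Quotient.mk I)]
    congr 1
    rw [← Polynomial.C_eq_natCast, ← map_mul, hc, map_one]
  have h0 : ∀ a ∈ I, (Polynomial.aeval β).toRingHom a = 0 := by
    intro a ha
    obtain ⟨t, rfl⟩ := Ideal.mem_span_singleton.mp ha
    simp only [AlgHom.toRingHom_eq_coe, RingHom.coe_coe, map_mul, map_sub, map_pow,
      Polynomial.aeval_X, Polynomial.aeval_one, hβm, sub_self, zero_mul]
  set ψ : (Polynomial R ⧸ I) →+* (N →ₗ[R] N) :=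
    Ideal.Quotient.lift I (Polynomial.aeval β).toRingHom h0 with hψdef
  have hψγ : ψ γ = β := by
    rw [hψdef, hγdef, Ideal.Quotient.lift_mk]
    simp
  set π : N →ₗ[R] N := ψ (piP γ cQ m) with hπdef
  -- master hypotheses
  have hππ : π * π = π := by rw [hπdef, ← map_mul, KP1 γ cQ m hmE hγm hcQ]
  have hβπ : β * π = π * β := by
    have h := congrArg ψ (mul_comm γ (piP γ cQ m))
    simpa only [map_mul, hψγ, ← hπdef] using h
  have hβ2π : β * (β * π) = π := by
    have h := congrArg ψ (KP2 γ cQ m hmE hγm)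
    simp only [map_mul, hψγ, ← hπdef] at h
    rw [← mul_assoc]
    exact h
  -- powers of b.symm
  have hββ : β * β ^ (m - 1) = 1 := by rw [← pow_succ', Nat.sub_add_cancel hm1, hβm]
  have hbsymm : ∀ x, b.symm x = (β ^ (m - 1)) x := by
    intro x
    apply b.injective
    rw [b.apply_symm_apply]
    have h := LinearMap.ext_iff.mp hββ x
    simp only [Module.End.mul_apply, Module.End.one_apply] at h
    symm
    calc b ((β ^ (m - 1)) x) = β ((β ^ (m - 1)) x) := rfl
    _ = x := h
  have hβψ : β - β ^ (m - 1) = ψ (γ - γ ^ (m - 1)) := by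
    rw [map_sub, map_pow, hψγ]
  -- hs1
  have hs1 : ∀ z, π z = 0 → ∃ w, π w = 0 ∧ b w - w = z := by
    intro z hz
    refine ⟨(ψ ((cQ * vP γ m) * (1 - piP γ cQ m))) z, ?_, ?_⟩
    · have hop : π * ψ ((cQ * vP γ m) * (1 - piP γ cQ m)) = 0 := by
        rw [hπdef, ← map_mul, KpX γ cQ m hmE hγm hcQ (cQ * vP γ m), map_zero]
      have h := LinearMap.ext_iff.mp hop z
      simpa [Module.End.mul_apply] using h
    · have hop : (β - 1) * ψ ((cQ * vP γ m) * (1 - piP γ cQ m)) = 1 - π := by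
        calc (β - 1) * ψ ((cQ * vP γ m) * (1 - piP γ cQ m))
            = ψ ((γ - 1) * ((cQ * vP γ m) * (1 - piP γ cQ m))) := by
              conv_rhs => rw [map_mul, map_sub, map_one, hψγ]
        _ = ψ (1 - piP γ cQ m) := by rw [KW1 γ cQ m hmE hγm hcQ]
        _ = 1 - π := by rw [map_sub, map_one, hπdef]
      have h := LinearMap.ext_iff.mp hop z
      simp only [Module.End.mul_apply, LinearMap.sub_apply, Module.End.one_apply] at h
      rw [hz, sub_zero] at h
      exact h
  -- hs2
  have hs2 : ∀ z, π z = 0 → ∃ w, π w = 0 ∧ b w + w = z := by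
    intro z hz
    refine ⟨(ψ ((-(cQ * vP (-γ) m)) * (1 - piP γ cQ m))) z, ?_, ?_⟩
    · have hop : π * ψ ((-(cQ * vP (-γ) m)) * (1 - piP γ cQ m)) = 0 := by
        rw [hπdef, ← map_mul, KpX γ cQ m hmE hγm hcQ (-(cQ * vP (-γ) m)), map_zero]
      have h := LinearMap.ext_iff.mp hop z
      simpa [Module.End.mul_apply] using h
    · have hop : (β + 1) * ψ ((-(cQ * vP (-γ) m)) * (1 - piP γ cQ m)) = 1 - π := by
        calc (β + 1) * ψ ((-(cQ * vP (-γ) m)) * (1 - piP γ cQ m))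
            = ψ ((γ + 1) * ((-(cQ * vP (-γ) m)) * (1 - piP γ cQ m))) := by
              conv_rhs => rw [map_mul, map_add, map_one, hψγ]
        _ = ψ (1 - piP γ cQ m) := by rw [KW2 γ cQ m hmE hγm hcQ]
        _ = 1 - π := by rw [map_sub, map_one, hπdef]
      have h := LinearMap.ext_iff.mp hop z
      simp only [Module.End.mul_apply, LinearMap.add_apply, LinearMap.sub_apply,
        Module.End.one_apply] at h
      rw [hz, sub_zero] at h
      exact h
  -- hs3
  have hw3op : (β - β ^ (m - 1)) *
      ψ (((cQ * vP γ m) * (-(cQ * vP (-γ) m)) * γ) * (1 - piP γ cQ m)) = 1 - π := by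
    rw [hβψ, ← map_mul, KW3 γ cQ m hmE hm0 hγm hcQ, map_sub, map_one, hπdef]
  have hs3 : ∀ z, π z = 0 → ∃ w, π w = 0 ∧ b w - b.symm w = z := by
    intro z hz
    refine ⟨(ψ (((cQ * vP γ m) * (-(cQ * vP (-γ) m)) * γ) * (1 - piP γ cQ m))) z, ?_, ?_⟩
    · have hop : π * ψ (((cQ * vP γ m) * (-(cQ * vP (-γ) m)) * γ) * (1 - piP γ cQ m)) = 0 := by
        rw [hπdef, ← map_mul, KpX γ cQ m hmE hγm hcQ ((cQ * vP γ m) * (-(cQ * vP (-γ) m)) * γ),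
          map_zero]
      have h := LinearMap.ext_iff.mp hop z
      simpa [Module.End.mul_apply] using h
    · have h := LinearMap.ext_iff.mp hw3op z
      simp only [Module.End.mul_apply, LinearMap.sub_apply, Module.End.one_apply] at h
      rw [hz, sub_zero] at h
      rw [hbsymm]
      exact h
  -- hinj
  have hinj : ∀ x, π x = 0 → b x - b.symm x = 0 → x = 0 := by
    intro x hπx hbx
    have hKW3' : ((((cQ * vP γ m) * (-(cQ * vP (-γ) m)) * γ) * (1 - piP γ cQ m)) *
        (γ - γ ^ (m - 1))) = 1 - piP γ cQ m := by
      rw [mul_comm]; exact KW3 γ cQ m hmE hm0 hγm hcQ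
    have hQcomm : ψ (((cQ * vP γ m) * (-(cQ * vP (-γ) m)) * γ) * (1 - piP γ cQ m)) *
        (β - β ^ (m - 1)) = 1 - π := by
      rw [hβψ, ← map_mul, hKW3', map_sub, map_one, hπdef]
    have h := LinearMap.ext_iff.mp hQcomm x
    simp only [Module.End.mul_apply, LinearMap.sub_apply, Module.End.one_apply] at h
    rw [hπx, sub_zero] at h
    have hbx2 : β x - (β ^ (m - 1)) x = 0 := by
      rw [← hbsymm x]
      exact hbx
    rw [hbx2, map_zero] at h
    exact h.symm
  exact master q b hb hc2 h2ne π hππ hβπ hβ2π hs1 hs2 hs3 hinj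

end BranchK

section BranchField

set_option maxHeartbeats 1000000 in
private theorem branch_field {R : Type*} [CommRing R] [IsDomain R]
    {N : Type*} [AddCommGroup N] [Module R N] [Module.Finite R N]
    (q : N →ₗ[R] N →ₗ[R] R)
    (b : N ≃ₗ[R] N) (hb : ∀ x y : N, q (b x) (b y) = q x y)
    (hf : IsField R) (hchar : (2 : R) ≠ 0)
    (hsem : Module.End.IsSemisimple (b : N →ₗ[R] N)) :
    ∃ Nplus Nminus Nstar : Submodule R N,
      DirectSum.IsInternal ![Nplus, Nminus, Nstar] ∧
      (∀ x ∈ Nplus, ∀ y ∈ Nminus, q x y = 0) ∧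
      (∀ x ∈ Nplus, ∀ y ∈ Nstar, q x y = 0) ∧
      (∀ x ∈ Nminus, ∀ y ∈ Nstar, q x y = 0) ∧
      (∀ x ∈ Nplus, b x = x) ∧
      (∀ x ∈ Nminus, b x = -x) ∧
      (∀ x ∈ Nstar, b x ∈ Nstar) ∧
      Set.BijOn (fun x => b x - b.symm x) (Nstar : Set N) (Nstar : Set N) := by
  letI : Field R := hf.toField
  set β : N →ₗ[R] N := (b : N →ₗ[R] N) with hβdef
  set g : N →ₗ[R] N := β * β - 1 with hgdef
  set K : Submodule R N := LinearMap.ker g with hKdef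
  have hgβcomm : g * β = β * g := by rw [hgdef]; noncomm_ring
  have hKinv : K ∈ Module.End.invtSubmodule β := by
    rw [Module.End.mem_invtSubmodule]
    intro x hx
    simp only [Submodule.mem_comap]
    refine LinearMap.mem_ker.mpr ?_
    have h1 : g (β x) = (g * β) x := rfl
    rw [h1, hgβcomm]
    have h2 : (β * g) x = β (g x) := rfl
    rw [h2, LinearMap.mem_ker.mp hx, map_zero]
  obtain ⟨W, hWinv, hKW⟩ := (Module.End.isSemisimple_iff.mp hsem) K hKinv
  have hWβ : ∀ z ∈ W, β z ∈ W := by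
    intro z hz
    exact (Module.End.mem_invtSubmodule β).mp hWinv hz
  have hKβ : ∀ z ∈ K, β z ∈ K := by
    intro z hz
    exact (Module.End.mem_invtSubmodule β).mp hKinv hz
  set π : N →ₗ[R] N := K.subtype ∘ₗ Submodule.linearProjOfIsCompl K W hKW with hπdef
  have hπmemK : ∀ x, π x ∈ K := fun x => (Submodule.linearProjOfIsCompl K W hKW x).2
  have hπK : ∀ y ∈ K, π y = y := by
    intro y hy
    have h := Submodule.linearProjOfIsCompl_apply_left hKW ⟨y, hy⟩
    have h2 : π y = ((Submodule.linearProjOfIsCompl K W hKW) y : N) := rfl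
    rw [h2]
    exact congrArg Subtype.val h
  have hπW : ∀ z ∈ W, π z = 0 := by
    intro z hz
    have h := Submodule.linearProjOfIsCompl_apply_right' hKW hz
    have h2 : π z = ((Submodule.linearProjOfIsCompl K W hKW) z : N) := rfl
    rw [h2]
    exact congrArg Subtype.val h
  have hWmem : ∀ x, x - π x ∈ W := by
    intro x
    have hx : x ∈ K ⊔ W := by rw [hKW.sup_eq_top]; trivial
    obtain ⟨y, hy, z, hz, hyz⟩ := Submodule.mem_sup.mp hx
    have hπx : π x = y := by
      rw [← hyz, map_add, hπK y hy, hπW z hz, add_zero]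
    rw [hπx, ← hyz]
    simpa using hz
  have hgπ : ∀ x, g (π x) = 0 := fun x => LinearMap.mem_ker.mp (hπmemK x)
  have hββπ : ∀ x, β (β (π x)) = π x := by
    intro x
    have h := hgπ x
    simp only [hgdef, LinearMap.sub_apply, Module.End.mul_apply, Module.End.one_apply] at h
    exact sub_eq_zero.mp h
  have hππ : π * π = π := by
    ext x
    simp only [Module.End.mul_apply]
    exact hπK _ (hπmemK x)
  have hβ2π : β * (β * π) = π := by
    ext x
    simp only [Module.End.mul_apply]
    exact hββπ x
  have hβπ : β * π = π * β := by
    ext x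
    simp only [Module.End.mul_apply]
    have hdec : β x = β (π x) + β (x - π x) := by
      rw [← map_add]
      congr 1
      abel
    rw [hdec, map_add, hπK _ (hKβ _ (hπmemK x)), hπW _ (hWβ _ (hWmem x)), add_zero]
  have hkerW : ∀ x, π x = 0 ↔ x ∈ W := by
    intro x
    constructor
    · intro h
      have := hWmem x
      rwa [h, sub_zero] at this
    · exact hπW x
  have hdisj : ∀ x, x ∈ K → x ∈ W → x = 0 :=
    fun x h1 h2 => (Submodule.disjoint_def.mp hKW.disjoint) x h1 h2
  -- surjectivity engine on W
  have hres : ∀ (f : N →ₗ[R] N), (∀ z ∈ W, f z ∈ W) → (∀ z ∈ W, f z = 0 → z = 0) →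
      ∀ y ∈ W, ∃ w ∈ W, f w = y := by
    intro f hfW hfinj y hy
    have h0 : ∀ u : W, f.restrict hfW u = 0 → u = 0 := by
      rintro ⟨z, hz⟩ h
      apply Subtype.ext
      have hz0 : f z = 0 := by
        have := congrArg Subtype.val h
        rwa [LinearMap.restrict_coe_apply] at this
      exact hfinj z hz hz0
    have hker : LinearMap.ker (f.restrict hfW) = ⊥ := LinearMap.ker_eq_bot'.mpr h0
    have hsurj := LinearMap.injective_iff_surjective.mp (LinearMap.ker_eq_bot.mp hker)
    obtain ⟨⟨w, hw⟩, hweq⟩ := hsurj ⟨y, hy⟩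
    refine ⟨w, hw, ?_⟩
    have := congrArg Subtype.val hweq
    rwa [LinearMap.restrict_coe_apply] at this
  -- membership and injectivity for the three maps
  have hW1 : ∀ z ∈ W, (β - 1) z ∈ W := by
    intro z hz
    simp only [LinearMap.sub_apply, Module.End.one_apply]
    exact Submodule.sub_mem _ (hWβ z hz) hz
  have hW2 : ∀ z ∈ W, (β + 1) z ∈ W := by
    intro z hz
    simp only [LinearMap.add_apply, Module.End.one_apply]
    exact Submodule.add_mem _ (hWβ z hz) hz
  have hβinj : ∀ z, β z = 0 → z = 0 := by
    intro z hz
    have : b z = 0 := hz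
    exact b.injective (by rw [this, map_zero])
  have hWbsymm : ∀ z ∈ W, b.symm z ∈ W := by
    intro z hz
    obtain ⟨w, hw, hweq⟩ := hres β hWβ (fun z _ h => hβinj z h) z hz
    have hβw : b w = z := hweq
    rw [← hβw, b.symm_apply_apply]
    exact hw
  set σ : N →ₗ[R] N := (b.symm : N →ₗ[R] N) with hσdef
  have hW3 : ∀ z ∈ W, (β - σ) z ∈ W := by
    intro z hz
    simp only [LinearMap.sub_apply]
    exact Submodule.sub_mem _ (hWβ z hz) (hWbsymm z hz)
  have hinj1 : ∀ z ∈ W, (β - 1) z = 0 → z = 0 := by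
    intro z hz h0
    simp only [LinearMap.sub_apply, Module.End.one_apply] at h0
    have hβz : β z = z := sub_eq_zero.mp h0
    have hk : z ∈ K := by
      refine LinearMap.mem_ker.mpr ?_
      simp only [hgdef, LinearMap.sub_apply, Module.End.mul_apply, Module.End.one_apply]
      rw [hβz, hβz, sub_self]
    exact hdisj z hk hz
  have hinj2 : ∀ z ∈ W, (β + 1) z = 0 → z = 0 := by
    intro z hz h0
    simp only [LinearMap.add_apply, Module.End.one_apply] at h0
    have hβz : β z = -z := eq_neg_of_add_eq_zero_left h0
    have hk : z ∈ K := by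
      refine LinearMap.mem_ker.mpr ?_
      simp only [hgdef, LinearMap.sub_apply, Module.End.mul_apply, Module.End.one_apply]
      rw [hβz, map_neg, hβz, neg_neg, sub_self]
    exact hdisj z hk hz
  have hinj3 : ∀ z ∈ W, (β - σ) z = 0 → z = 0 := by
    intro z hz h0
    simp only [LinearMap.sub_apply] at h0
    have hβz : β z = b.symm z := sub_eq_zero.mp h0
    have hk : z ∈ K := by
      refine LinearMap.mem_ker.mpr ?_
      simp only [hgdef, LinearMap.sub_apply, Module.End.mul_apply, Module.End.one_apply]
      have : β (β z) = z := by
        rw [hβz]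
        exact b.apply_symm_apply z
      rw [this, sub_self]
    exact hdisj z hk hz
  -- master hypotheses
  have hs1 : ∀ z, π z = 0 → ∃ w, π w = 0 ∧ b w - w = z := by
    intro z hz
    obtain ⟨w, hw, hweq⟩ := hres (β - 1) hW1 hinj1 z ((hkerW z).mp hz)
    refine ⟨w, (hkerW w).mpr hw, ?_⟩
    simp only [LinearMap.sub_apply, Module.End.one_apply] at hweq
    exact hweq
  have hs2 : ∀ z, π z = 0 → ∃ w, π w = 0 ∧ b w + w = z := by
    intro z hz
    obtain ⟨w, hw, hweq⟩ := hres (β + 1) hW2 hinj2 z ((hkerW z).mp hz)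
    refine ⟨w, (hkerW w).mpr hw, ?_⟩
    simp only [LinearMap.add_apply, Module.End.one_apply] at hweq
    exact hweq
  have hs3 : ∀ z, π z = 0 → ∃ w, π w = 0 ∧ b w - b.symm w = z := by
    intro z hz
    obtain ⟨w, hw, hweq⟩ := hres (β - σ) hW3 hinj3 z ((hkerW z).mp hz)
    refine ⟨w, (hkerW w).mpr hw, ?_⟩
    simp only [LinearMap.sub_apply] at hweq
    exact hweq
  have hinjM : ∀ x, π x = 0 → b x - b.symm x = 0 → x = 0 := by
    intro x hx h0
    refine hinj3 x ((hkerW x).mp hx) ?_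
    simp only [LinearMap.sub_apply]
    exact h0
  have hc2 : (2 : R)⁻¹ * 2 = 1 := inv_mul_cancel₀ hchar
  exact master q b hb hc2 hchar π hππ hβπ hβ2π hs1 hs2 hs3 hinjM

end BranchField


/-- `R` is either a field of characteristic `0`, or the ring of integers of a `p`-adic
field with odd residue characteristic. -/
def IsPaperRing (R : Type*) [CommRing R] [IsDomain R] [IsLocalRing R] : Prop :=
  (IsField R ∧ CharZero R) ∨
  (IsDiscreteValuationRing R ∧ IsAdicComplete (IsLocalRing.maximalIdeal R) R ∧
    Finite (IsLocalRing.ResidueField R) ∧ ringChar (IsLocalRing.ResidueField R) ≠ 2)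

/-- `g` is `R`-semisimple. -/
def IsRSemisimple (R : Type*) [CommRing R] [IsLocalRing R] {M : Type*} [AddCommGroup M]
    [Module R M] (g : M ≃ₗ[R] M) : Prop :=
  (IsField R ∧ Module.End.IsSemisimple (g : M →ₗ[R] M)) ∨
  (∃ k : ℕ, 0 < k ∧ Nat.Coprime k (ringChar (IsLocalRing.ResidueField R)) ∧ g ^ k = 1)

/-- For an `R`-semisimple orthogonal transformation `b` of a unimodular symmetric bilinear
free module `(N, q)`, there is a `b`-invariant `q`-orthogonal decomposition
`N = N₊ ⊕ N₋ ⊕ N⋆` with `b = +1` on `N₊`, `b = −1` on `N₋`, and `b − b⁻¹` invertible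
on `N⋆`. -/
theorem orthogonal_plus_minus_splitting
    {R : Type*} [CommRing R] [IsDomain R] [IsLocalRing R] (hR : IsPaperRing R)
    {N : Type*} [AddCommGroup N] [Module R N] [Module.Free R N] [Module.Finite R N]
    (q : N →ₗ[R] N →ₗ[R] R) (hsymm : ∀ x y : N, q x y = q y x)
    (hunimod : Function.Bijective ⇑q)
    (b : N ≃ₗ[R] N) (hb : ∀ x y : N, q (b x) (b y) = q x y)
    (hss : IsRSemisimple R b) :
    ∃ Nplus Nminus Nstar : Submodule R N,
      DirectSum.IsInternal ![Nplus, Nminus, Nstar] ∧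
      (∀ x ∈ Nplus, ∀ y ∈ Nminus, q x y = 0) ∧
      (∀ x ∈ Nplus, ∀ y ∈ Nstar, q x y = 0) ∧
      (∀ x ∈ Nminus, ∀ y ∈ Nstar, q x y = 0) ∧
      (∀ x ∈ Nplus, b x = x) ∧
      (∀ x ∈ Nminus, b x = -x) ∧
      (∀ x ∈ Nstar, b x ∈ Nstar) ∧
      Set.BijOn (fun x => b x - b.symm x) (Nstar : Set N) (Nstar : Set N) := by
  rcases hss with ⟨hf, hsem⟩ | ⟨k, hk, hcop, hbk⟩
  · -- semisimple over a field
    have hchar0 : CharZero R := by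
      rcases hR with ⟨_, hc⟩ | ⟨hdvr, _, _, _⟩
      · exact hc
      · haveI := hdvr
        exact absurd hf (IsDiscreteValuationRing.not_isField R)
    have hchar : (2 : R) ≠ 0 := by
      have h2 : ((2 : ℕ) : R) ≠ 0 := Nat.cast_ne_zero.mpr (by norm_num)
      simpa using h2
    exact branch_field q b hb hf hchar hsem
  · -- finite order
    have hu : IsUnit ((2 * k : ℕ) : R) := by
      rcases hR with ⟨hf, hc⟩ | ⟨hdvr, _, hfin, hchar2⟩
      · have hne : ((2 * k : ℕ) : R) ≠ 0 := Nat.cast_ne_zero.mpr (by omega)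
        obtain ⟨c, hc'⟩ := hf.mul_inv_cancel hne
        exact IsUnit.of_mul_eq_one c hc'
      · haveI := hfin
        set κ := IsLocalRing.ResidueField R with hκdef
        set p := ringChar κ with hpdef
        have hp : p.Prime := CharP.char_is_prime κ p
        have hndvd : ¬ (p ∣ 2 * k) := by
          intro hdvd
          rcases (Nat.Prime.dvd_mul hp).mp hdvd with h2 | hk'
          · exact hchar2 ((Nat.prime_dvd_prime_iff_eq hp Nat.prime_two).mp h2)
          · have hd : p ∣ Nat.gcd k p := Nat.dvd_gcd hk' dvd_rfl
            rw [Nat.Coprime.gcd_eq_one hcop] at hd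
            exact hp.ne_one (Nat.dvd_one.mp hd)
        have hcast : ((2 * k : ℕ) : κ) ≠ 0 := by
          rw [Ne, CharP.cast_eq_zero_iff κ p]
          exact hndvd
        have hmem : ((2 * k : ℕ) : R) ∉ IsLocalRing.maximalIdeal R := by
          intro hmem
          apply hcast
          have h0 : IsLocalRing.residue R ((2 * k : ℕ) : R) = 0 :=
            (IsLocalRing.residue_eq_zero_iff _).mpr hmem
          rwa [map_natCast] at h0
        exact IsLocalRing.notMem_maximalIdeal.mp hmem
    exact branch_finite_order q b hb k hk hbk hu
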